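/- Let G be a finite group and g : G an element whose normal closure is proper (Subgroup.normalClosure {g} ≠ (⊤ : Subgroup G)). Then there exist a group H with Nat.card H ≤ (Nat.card G)^2, an injective group homomorphism f : G →* H, and an element h : H with h^2 = f g. -/

import Mathlib

section Aux

variable (G : Type) [Group G]

/-- The swap action of `C₂` on `G × G`. -/
def swapHom : Multiplicative (ZMod 2) →* MulAut (G × G) where
  toFun x := if x = 1 then 1 else (MulEquiv.prodComm : G × G ≃* G × G)
  map_one' := if_pos rfl
  map_mul' a b := by
    have hcases : ∀ x : Multiplicative (ZMod 2), x = 1 ∨ x = Multiplicative.ofAdd 1 := by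
      decide
    have hsw : (MulEquiv.prodComm : G × G ≃* G × G) * MulEquiv.prodComm = 1 := by
      ext x <;> rfl
    have h2 : (Multiplicative.ofAdd 1 : Multiplicative (ZMod 2)) * Multiplicative.ofAdd 1 = 1 := by
      decide
    have hne : (Multiplicative.ofAdd 1 : Multiplicative (ZMod 2)) ≠ 1 := by decide
    rcases hcases a with ha | ha <;> rcases hcases b with hb | hb <;>
      subst ha <;> subst hb <;> simp [hsw, h2, hne]

/-- The wreath product `G ≀ C₂`. -/
abbrev Wr := (G × G) ⋊[swapHom G] Multiplicative (ZMod 2)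

instance : Group (Wr G) := SemidirectProduct.instGroup

variable (N : Subgroup G) [N.Normal]

/-- The subgroup of the wreath product consisting of elements whose two
`G`-coordinates are congruent mod `N`. -/
def Hsub : Subgroup (Wr G) where
  carrier := {w | QuotientGroup.mk' N w.left.1 = QuotientGroup.mk' N w.left.2}
  one_mem' := rfl
  mul_mem' := by
    intro a b ha hb
    have hcases : ∀ x : Multiplicative (ZMod 2), x = 1 ∨ x = Multiplicative.ofAdd 1 := by
      decide
    have hne : (Multiplicative.ofAdd 1 : Multiplicative (ZMod 2)) ≠ 1 := by decide
    simp only [Set.mem_setOf_eq, QuotientGroup.mk'_apply] at ha hb ⊢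
    rw [SemidirectProduct.mul_left]
    rcases hcases a.right with h | h <;> rw [h] <;>
      simp [swapHom, hne, ha, hb]
  inv_mem' := by
    intro a ha
    have hcases : ∀ x : Multiplicative (ZMod 2), x = 1 ∨ x = Multiplicative.ofAdd 1 := by
      decide
    have hne : (Multiplicative.ofAdd 1 : Multiplicative (ZMod 2)) ≠ 1 := by decide
    have hinv : (Multiplicative.ofAdd 1 : Multiplicative (ZMod 2))⁻¹ = Multiplicative.ofAdd 1 := by
      decide
    simp only [Set.mem_setOf_eq, QuotientGroup.mk'_apply] at ha ⊢
    rw [SemidirectProduct.inv_left]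
    rcases hcases a.right with h | h <;> rw [h] <;>
      simp [swapHom, hne, hinv, ha]

/-- The diagonal embedding of `G` into `Hsub`. -/
def diagHom : G →* Hsub G N :=
  ((SemidirectProduct.inl.comp
      ((MonoidHom.id G).prod (MonoidHom.id G)) : G →* Wr G)).codRestrict _
    (fun x => by
      show QuotientGroup.mk' N _ = QuotientGroup.mk' N _
      rfl)

end Aux

/-- Proposition 1, case (b): if the normal closure of `g` in a finite group `G` is proper,
then `G` embeds into a group of order at most `|G|²` in which `g` is a square. -/
theorem economical_root_of_normal_closure_proper (G : Type) [Group G] [Finite G]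
    (g : G) (hg : Subgroup.normalClosure {g} ≠ (⊤ : Subgroup G)) :
    ∃ (H : Type) (_ : Group H) (f : G →* H),
      Nat.card H ≤ (Nat.card G) ^ 2 ∧
      Function.Injective f ∧
      ∃ h : H, h ^ 2 = f g := by
  set N : Subgroup G := Subgroup.normalClosure {g} with hN
  have : N.Normal := Subgroup.normalClosure_normal
  refine ⟨Hsub G N, inferInstance, diagHom G N, ?_, ?_, ?_⟩
  · -- cardinality bound
    -- injection into (G × N) × C₂
    have hinj : Function.Injective (fun w : Hsub G N =>
        ((w.1.left.1, (⟨w.1.left.1⁻¹ * w.1.left.2, (QuotientGroup.eq).mp w.2⟩ : N)),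
          w.1.right)) := by
      intro w1 w2 h
      simp only [Prod.mk.injEq, Subtype.mk.injEq] at h
      obtain ⟨⟨h1, h2⟩, h3⟩ := h
      apply Subtype.ext
      apply SemidirectProduct.ext _ h3
      have : w1.1.left.2 = w2.1.left.2 := by
        have := congrArg (fun x => w1.1.left.1 * x) h2
        simpa [h1, mul_assoc] using this
      exact Prod.ext h1 this
    have hle : Nat.card (Hsub G N) ≤
        Nat.card ((G × N) × Multiplicative (ZMod 2)) :=
      Nat.card_le_card_of_injective _ hinj
    have hcard : Nat.card ((G × N) × Multiplicative (ZMod 2)) =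
        Nat.card G * Nat.card N * 2 := by
      simp [Nat.card_prod]
    have hNle : Nat.card N * 2 ≤ Nat.card G := by
      have hidx : N.index ≠ 1 := fun h => hg (Subgroup.index_eq_one.mp h)
      have hidx0 : N.index ≠ 0 := Subgroup.index_ne_zero_of_finite
      have hidx2 : 2 ≤ N.index := by omega
      calc Nat.card N * 2 ≤ Nat.card N * N.index :=
            Nat.mul_le_mul_left _ hidx2
        _ = Nat.card G := Subgroup.card_mul_index N
    calc Nat.card (Hsub G N) ≤ Nat.card G * Nat.card N * 2 := hle.trans_eq hcard
      _ = Nat.card G * (Nat.card N * 2) := by ring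
      _ ≤ Nat.card G * Nat.card G := Nat.mul_le_mul_left _ hNle
      _ = (Nat.card G) ^ 2 := (sq (Nat.card G)).symm
  · -- injectivity
    intro a b h
    have := congrArg (fun w : Hsub G N => w.1.left.1) h
    simpa [diagHom] using this
  · -- square root
    have hgmem : g ∈ N := Subgroup.subset_normalClosure (Set.mem_singleton g)
    have hgN : QuotientGroup.mk' N (1 : G) = QuotientGroup.mk' N g := by
      simp only [map_one]
      exact ((QuotientGroup.eq_one_iff g).mpr hgmem).symm
    refine ⟨⟨⟨(1, g), Multiplicative.ofAdd 1⟩, hgN⟩, ?_⟩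
    apply Subtype.ext
    apply SemidirectProduct.ext
    · have hne : (Multiplicative.ofAdd 1 : Multiplicative (ZMod 2)) ≠ 1 := by decide
      show ((⟨(1, g), Multiplicative.ofAdd 1⟩ : Wr G) ^ 2).left = (g, g)
      rw [sq, SemidirectProduct.mul_left]
      simp [swapHom, hne]
    · show ((⟨(1, g), Multiplicative.ofAdd 1⟩ : Wr G) ^ 2).right = (1 : Multiplicative (ZMod 2))
      rw [sq, SemidirectProduct.mul_right]
      have h2 : (Multiplicative.ofAdd 1 : Multiplicative (ZMod 2)) * Multiplicative.ofAdd 1 = 1 := by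
        decide
      exact h2
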